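/- Let K be a compact metric space and let Φ be a closed linear subspace of (C(K,ℝ), ‖·‖_∞) that separates the points of K and contains the constant functions. Then: (a) the set ΦExp(K) of Φ-exposed points of K is a norming subset for Φ, i.e. ‖φ‖_∞ = sup_{k ∈ ΦExp(K)} |φ(k)| for every φ ∈ Φ; and (b) ΦExp(K) ⊆ C for every closed subset C of K which is a boundary for Φ, i.e. such that ‖φ‖_∞ = max_{k∈C}|φ(k)| for every φ ∈ Φ. Consequently the closure of ΦExp(K) is the smallest closed boundary (the Shilov boundary) of Φ. -/

import Mathlib

open TopologicalSpace
set_option maxHeartbeats 1000000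
set_option synthInstance.maxHeartbeats 400000

section
variable {K : Type*} [MetricSpace K] [CompactSpace K]

noncomputable def msup (f : C(K, ℝ)) : ℝ := ⨆ x, f x

lemma exists_max [Nonempty K] (f : C(K, ℝ)) : ∃ x, ∀ y, f y ≤ f x := by
  obtain ⟨x, -, hx⟩ := isCompact_univ.exists_isMaxOn Set.univ_nonempty f.continuous.continuousOn
  exact ⟨x, fun y => hx (Set.mem_univ y)⟩

lemma le_msup [Nonempty K] (f : C(K,ℝ)) (y : K) : f y ≤ msup f := by
  obtain ⟨x, hx⟩ := exists_max f
  exact le_ciSup ⟨f x, by rintro _ ⟨z, rfl⟩; exact hx z⟩ y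

lemma msup_eq [Nonempty K] (f : C(K,ℝ)) {x : K} (hx : ∀ y, f y ≤ f x) : msup f = f x :=
  le_antisymm (ciSup_le hx) (le_msup f x)

lemma msup_lip [Nonempty K] (f g : C(K,ℝ)) : msup f ≤ msup g + ‖f - g‖ := by
  obtain ⟨x, hx⟩ := exists_max f
  rw [msup_eq f hx]
  have h1 : f x - g x ≤ ‖f - g‖ := by
    have h2 : |f x - g x| ≤ ‖f - g‖ := by
      simpa using ContinuousMap.norm_coe_le_norm (f - g) x
    linarith [abs_le.1 h2]
  linarith [le_msup g x]

lemma msup_lipschitz [Nonempty K] : LipschitzWith 1 (msup (K := K)) := by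
  refine LipschitzWith.of_dist_le_mul fun f g => ?_
  rw [Real.dist_eq, NNReal.coe_one, one_mul, dist_eq_norm, abs_le]
  constructor
  · have := msup_lip g f
    rw [show g - f = -(f - g) by ring, norm_neg] at this
    linarith
  · linarith [msup_lip f g]

lemma dense_exposing [Nonempty K] (Φ : Submodule ℝ C(K,ℝ)) (hclosed : IsClosed (Φ : Set C(K,ℝ)))
    (hsep : ∀ x y : K, x ≠ y → ∃ φ ∈ Φ, φ x ≠ φ y)
    (φ₀ : C(K,ℝ)) (hφ₀ : φ₀ ∈ Φ) (ε : ℝ) (hε : 0 < ε) :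
    ∃ ψ ∈ Φ, ‖ψ - φ₀‖ < ε ∧ ∃ k, ∀ y, y ≠ k → ψ y < ψ k := by
  haveI : CompleteSpace ↥Φ := hclosed.completeSpace_coe
  haveI : SecondCountableTopology C(K,ℝ) := UniformSpace.secondCountable_of_separable _
  haveI : SeparableSpace ↥Φ := TopologicalSpace.SecondCountableTopology.to_separableSpace
  set M : ↥Φ → ℝ := fun φ => msup (φ : C(K,ℝ)) with hMdef
  have hM : Continuous M := msup_lipschitz.continuous.comp continuous_subtype_val
  have Mlip : ∀ a b : ↥Φ, M a ≤ M b + ‖a - b‖ := by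
    intro a b
    have := msup_lip (a : C(K,ℝ)) (b : C(K,ℝ))
    simpa [hMdef] using this
  -- the open sets
  set G : ↥Φ → ℕ → Set ↥Φ := fun ψ n =>
    {φ | ∃ s : ℝ, 0 < s ∧ ∃ t : ℝ, 0 < t ∧
      (M (φ + s•ψ) - M φ)/s + (M (φ - t•ψ) - M φ)/t < 1/(n+1)} with hGdef
  have hGopen : ∀ ψ n, IsOpen (G ψ n) := by
    intro ψ n
    have : G ψ n = ⋃ s : ℝ, ⋃ (_ : 0 < s), ⋃ t : ℝ, ⋃ (_ : 0 < t),
        {φ | (M (φ + s•ψ) - M φ)/s + (M (φ - t•ψ) - M φ)/t < 1/(n+1)} := by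
      ext φ; simp [hGdef]
    rw [this]
    refine isOpen_iUnion fun s => isOpen_iUnion fun hs => isOpen_iUnion fun t =>
      isOpen_iUnion fun ht => ?_
    have hc : Continuous fun φ : ↥Φ =>
        (M (φ + s•ψ) - M φ)/s + (M (φ - t•ψ) - M φ)/t := by
      apply Continuous.add
      · exact (((hM.comp (continuous_id.add continuous_const)).sub hM).div_const s)
      · exact (((hM.comp (continuous_id.sub continuous_const)).sub hM).div_const t)
    exact isOpen_lt hc continuous_const
  have hGdense : ∀ ψ n, Dense (G ψ n) := by
    intro ψ n
    rw [Metric.dense_iff]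
    intro φc r hr
    by_contra hcon
    rw [Set.not_nonempty_iff_eq_empty] at hcon
    set c : ℝ := 1/(n+1) with hcdef
    have hc : 0 < c := by positivity
    have key : ∀ u : ℝ, |u| * (‖ψ‖+1) < r → ∀ s t : ℝ, 0 < s → 0 < t →
        c ≤ (M (φc + (u+s)•ψ) - M (φc + u•ψ))/s
            + (M (φc + (u-t)•ψ) - M (φc + u•ψ))/t := by
      intro u hu s t hs ht
      have hmemball : φc + u•ψ ∈ Metric.ball φc r := by
        rw [Metric.mem_ball, dist_eq_norm]
        have h0 : ‖φc + u•ψ - φc‖ = |u| * ‖ψ‖ := by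
          rw [show φc + u•ψ - φc = u•ψ by abel]
          rw [Submodule.coe_norm, Submodule.coe_smul, norm_smul, Real.norm_eq_abs, Submodule.coe_norm]
        refine lt_of_eq_of_lt h0 ?_
        have : |u| * ‖ψ‖ ≤ |u| * (‖ψ‖+1) := by nlinarith [abs_nonneg u, norm_nonneg ψ]
        linarith
      have hnotG : φc + u•ψ ∉ G ψ n := by
        intro h
        have : φc + u•ψ ∈ Metric.ball φc r ∩ G ψ n := ⟨hmemball, h⟩
        rw [hcon] at this; exact this
      rw [hGdef] at hnotG
      simp only [Set.mem_setOf_eq] at hnotG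
      push_neg at hnotG
      have := hnotG s hs t ht
      have e1 : φc + u•ψ + s•ψ = φc + (u+s)•ψ := by module
      have e2 : φc + u•ψ - t•ψ = φc + (u-t)•ψ := by module
      rw [e1, e2] at this
      exact this
    set g : ℝ → ℝ := fun u => M (φc + u•ψ) with hgdef
    have glip : ∀ u v : ℝ, g u - g v ≤ |u - v| * ‖ψ‖ := by
      intro u v
      have := Mlip (φc + u•ψ) (φc + v•ψ)
      have e : φc + u•ψ - (φc + v•ψ) = (u-v)•ψ := by module
      rw [e] at this
      rw [show ‖(u-v)•ψ‖ = |u-v| * ‖ψ‖ from by rw [Submodule.coe_norm, Submodule.coe_smul, norm_smul, Real.norm_eq_abs, Submodule.coe_norm]] at this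
      simp only [hgdef]; linarith
    obtain ⟨k, hk⟩ := exists_nat_gt (2*‖ψ‖/c)
    have hδpos : (0:ℝ) < r / ((k+2) * (‖ψ‖+1)) := by positivity
    set δ : ℝ := r / ((k+2) * (‖ψ‖+1)) with hδdef
    set Δ : ℕ → ℝ := fun i => g ((i+1)*δ) - g (i*δ) with hΔdef
    have hubound : ∀ x : ℝ, 0 ≤ x → x ≤ (k:ℝ)+1 → |x*δ| * (‖ψ‖+1) < r := by
      intro x hx0 h2
      have h1 : (0:ℝ) ≤ x*δ := by positivity
      rw [abs_of_nonneg h1]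
      have h3 : x*δ*(‖ψ‖+1) ≤ ((k:ℝ)+1)*δ*(‖ψ‖+1) := by
        nlinarith [norm_nonneg ψ, hδpos.le, mul_nonneg (sub_nonneg.2 h2) hδpos.le]
      have hD : ((k:ℝ)+2)*(‖ψ‖+1) ≠ 0 := by positivity
      have h4 : ((k:ℝ)+1)*δ*(‖ψ‖+1) < r := by
        calc ((k:ℝ)+1)*δ*(‖ψ‖+1) = δ * (((k:ℝ)+1)*(‖ψ‖+1)) := by ring
          _ < δ * (((k:ℝ)+2)*(‖ψ‖+1)) := by
              refine mul_lt_mul_of_pos_left ?_ hδpos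
              nlinarith [norm_nonneg ψ]
          _ = r := by rw [hδdef]; field_simp
      linarith
    have step : ∀ i : ℕ, i < k → Δ i + δ * c ≤ Δ (i+1) := by
      intro i hik
      have hik' : ((i:ℝ)+1) ≤ (k:ℝ)+1 := by
        have : (i:ℝ) ≤ (k:ℝ) := by exact_mod_cast hik.le
        linarith
      have := key (((i:ℝ)+1)*δ) (hubound ((i:ℝ)+1) (by positivity) hik') δ δ hδpos hδpos
      have e1 : (i+1)*δ + δ = ((i:ℝ)+1+1)*δ := by ring
      have e2 : (i+1)*δ - δ = (i:ℝ)*δ := by ring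
      rw [e1, e2] at this
      simp only [hΔdef, hgdef] at *
      rw [← add_div, le_div_iff₀ hδpos] at this
      push_cast
      push_cast at this
      nlinarith
    have mono : ∀ i : ℕ, i ≤ k → Δ 0 + i*(δ*c) ≤ Δ i := by
      intro i
      induction i with
      | zero => intro _; simp
      | succ j ih =>
        intro hj
        have h1 := ih (by omega)
        have h2 := step j (by omega)
        push_cast
        push_cast at h1
        linarith
    have hfin := mono k le_rfl
    have hΔk : Δ k ≤ δ * ‖ψ‖ := by
      have := glip (((k:ℝ)+1)*δ) ((k:ℝ)*δ)
      have e : ((k:ℝ)+1)*δ - (k:ℝ)*δ = δ := by ring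
      rw [e, abs_of_pos hδpos] at this
      simpa [hΔdef] using this
    have hΔ0 : -(δ * ‖ψ‖) ≤ Δ 0 := by
      have := glip ((0:ℝ)*δ) (((0:ℝ)+1)*δ)
      have e : (0:ℝ)*δ - ((0:ℝ)+1)*δ = -δ := by ring
      rw [e, abs_neg, abs_of_pos hδpos] at this
      simp only [hΔdef]
      push_cast
      linarith
    have hkc : (k:ℝ) * c ≤ 2 * ‖ψ‖ := by
      have h1 : Δ 0 + (k:ℝ)*(δ*c) ≤ δ*‖ψ‖ := le_trans hfin hΔk
      have h3' : δ * ((k:ℝ)*c) ≤ δ * (2*‖ψ‖) := by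
        calc δ * ((k:ℝ)*c) = (k:ℝ)*(δ*c) := by ring
          _ ≤ 2*(δ*‖ψ‖) := by linarith
          _ = δ * (2*‖ψ‖) := by ring
      exact le_of_mul_le_mul_left h3' hδpos
    rw [div_lt_iff₀ hc] at hk
    linarith
  -- Baire category
  obtain ⟨D, hDc, hDd⟩ := exists_countable_dense ↥Φ
  haveI := hDc.to_subtype
  have hdense : Dense (⋂ p : ↥D × ℕ, G (p.1 : ↥Φ) p.2) :=
    dense_iInter_of_isOpen (fun p => hGopen _ _) (fun p => hGdense _ _)
  obtain ⟨φg, hφgball, hφgmem⟩ :=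
    Metric.dense_iff.1 hdense ⟨φ₀, hφ₀⟩ ε hε
  obtain ⟨x, hx⟩ := exists_max (φg : C(K,ℝ))
  refine ⟨(φg : C(K,ℝ)), φg.2, ?_, x, ?_⟩
  · rw [Metric.mem_ball, dist_eq_norm] at hφgball
    have h0 : ‖φg - (⟨φ₀, hφ₀⟩ : ↥Φ)‖ = ‖(φg : C(K,ℝ)) - φ₀‖ := by
      rw [Submodule.coe_norm]; norm_cast
    replace hφgball := lt_of_eq_of_lt h0.symm hφgball
    exact hφgball
  · intro y hyx
    by_contra hlt
    push_neg at hlt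
    have heq : (φg : C(K,ℝ)) y = (φg : C(K,ℝ)) x := le_antisymm (hx y) hlt
    obtain ⟨χ, hχΦ, hχ⟩ := hsep x y (Ne.symm hyx)
    set γ : ℝ := |χ x - χ y| with hγdef
    have hγpos : 0 < γ := abs_pos.2 (sub_ne_zero.2 hχ)
    obtain ⟨ψ, hψball, hψD⟩ := Metric.dense_iff.1 hDd ⟨χ, hχΦ⟩ (γ/4) (by positivity)
    have hψbound : ∀ z : K, |(ψ : C(K,ℝ)) z - χ z| ≤ γ/4 := by
      intro z
      rw [Metric.mem_ball, dist_eq_norm] at hψball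
      have h1 : ‖ψ - (⟨χ, hχΦ⟩ : ↥Φ)‖ = ‖(ψ : C(K,ℝ)) - χ‖ := by
        rw [Submodule.coe_norm]; norm_cast
      replace hψball := lt_of_eq_of_lt h1.symm hψball
      have := ContinuousMap.norm_coe_le_norm ((ψ : C(K,ℝ)) - χ) z
      simp only [ContinuousMap.coe_sub, Pi.sub_apply, Real.norm_eq_abs] at this
      linarith
    have hψsep : γ/2 ≤ |(ψ : C(K,ℝ)) x - (ψ : C(K,ℝ)) y| := by
      have h1 := hψbound x
      have h2 := hψbound y
      have := abs_sub_abs_le_abs_sub (χ x - χ y) ((χ x - χ y) - ((ψ : C(K,ℝ)) x - (ψ : C(K,ℝ)) y))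
      have h3 : |(χ x - χ y) - ((ψ : C(K,ℝ)) x - (ψ : C(K,ℝ)) y)| ≤ γ/2 := by
        have := abs_sub (χ x - (ψ : C(K,ℝ)) x) (χ y - (ψ : C(K,ℝ)) y)
        rw [abs_sub_comm] at h1 h2
        calc |(χ x - χ y) - ((ψ : C(K,ℝ)) x - (ψ : C(K,ℝ)) y)|
            = |(χ x - (ψ : C(K,ℝ)) x) - (χ y - (ψ : C(K,ℝ)) y)| := by ring_nf
          _ ≤ |χ x - (ψ : C(K,ℝ)) x| + |χ y - (ψ : C(K,ℝ)) y| := abs_sub _ _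
          _ ≤ γ/4 + γ/4 := add_le_add h1 h2
          _ = γ/2 := by ring
      have h4 : |(χ x - χ y)| - |(χ x - χ y) - ((ψ : C(K,ℝ)) x - (ψ : C(K,ℝ)) y)|
          ≤ |(ψ : C(K,ℝ)) x - (ψ : C(K,ℝ)) y| := by
        have := abs_sub_abs_le_abs_sub (χ x - χ y) ((ψ : C(K,ℝ)) x - (ψ : C(K,ℝ)) y)
        have h5 := abs_sub (χ x - χ y) ((ψ : C(K,ℝ)) x - (ψ : C(K,ℝ)) y)
        linarith [abs_sub_abs_le_abs_sub (χ x - χ y) ((ψ : C(K,ℝ)) x - (ψ : C(K,ℝ)) y),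
          abs_le.1 (le_refl |(χ x - χ y) - ((ψ : C(K,ℝ)) x - (ψ : C(K,ℝ)) y)|)]
      rw [← hγdef] at h4
      linarith
    set a : ℝ := (ψ : C(K,ℝ)) x with hadef
    set b : ℝ := (ψ : C(K,ℝ)) y with hbdef
    have habpos : 0 < |a - b| := lt_of_lt_of_le (by positivity) hψsep
    obtain ⟨n, hn⟩ := exists_nat_one_div_lt habpos
    have hmem : φg ∈ G (ψ : ↥Φ) n := by
      have := Set.mem_iInter.1 hφgmem (⟨ψ, hψD⟩, n)
      exact this
    rw [hGdef] at hmem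
    obtain ⟨s, hs, t, ht, hsum⟩ := hmem
    have hMφg : M φg = (φg : C(K,ℝ)) x := msup_eq _ hx
    have slope1a : a ≤ (M (φg + s•ψ) - M φg)/s := by
      rw [le_div_iff₀ hs]
      have h1 : ((φg + s•ψ : ↥Φ) : C(K,ℝ)) x = (φg : C(K,ℝ)) x + s * a := by
        simp [hadef]
      have := le_msup ((φg + s•ψ : ↥Φ) : C(K,ℝ)) x
      rw [h1] at this
      simp only [hMdef] at *
      linarith
    have slope1b : b ≤ (M (φg + s•ψ) - M φg)/s := by
      rw [le_div_iff₀ hs]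
      have h1 : ((φg + s•ψ : ↥Φ) : C(K,ℝ)) y = (φg : C(K,ℝ)) y + s * b := by
        simp [hbdef]
      have := le_msup ((φg + s•ψ : ↥Φ) : C(K,ℝ)) y
      rw [h1, heq] at this
      simp only [hMdef] at *
      linarith
    have slope2a : -a ≤ (M (φg - t•ψ) - M φg)/t := by
      rw [le_div_iff₀ ht]
      have h1 : ((φg - t•ψ : ↥Φ) : C(K,ℝ)) x = (φg : C(K,ℝ)) x - t * a := by
        simp [hadef]
      have := le_msup ((φg - t•ψ : ↥Φ) : C(K,ℝ)) x
      rw [h1] at this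
      simp only [hMdef] at *
      linarith
    have slope2b : -b ≤ (M (φg - t•ψ) - M φg)/t := by
      rw [le_div_iff₀ ht]
      have h1 : ((φg - t•ψ : ↥Φ) : C(K,ℝ)) y = (φg : C(K,ℝ)) y - t * b := by
        simp [hbdef]
      have := le_msup ((φg - t•ψ : ↥Φ) : C(K,ℝ)) y
      rw [h1, heq] at this
      simp only [hMdef] at *
      linarith
    have habs : |a - b| ≤ (M (φg + s•ψ) - M φg)/s + (M (φg - t•ψ) - M φg)/t := by
      rw [abs_sub_le_iff]
      constructor <;> linarith
    have : 1/((n:ℝ)+1) < 1/((n:ℝ)+1) := by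
      calc 1/((n:ℝ)+1) < |a - b| := hn
        _ ≤ _ := habs
        _ < 1/((n:ℝ)+1) := hsum
    exact lt_irrefl _ this
  
end

section
variable {K : Type*} [MetricSpace K] [CompactSpace K]

lemma biSup_abs_le (S : Set K) (f : C(K,ℝ)) : (⨆ x ∈ S, |f x|) ≤ ‖f‖ :=
  Real.iSup_le (fun x => Real.iSup_le
    (fun _ => by simpa using ContinuousMap.norm_coe_le_norm f x) (norm_nonneg f)) (norm_nonneg f)

lemma biSup_abs_nonneg (S : Set K) (f : C(K,ℝ)) : 0 ≤ ⨆ x ∈ S, |f x| :=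
  Real.iSup_nonneg fun x => Real.iSup_nonneg fun _ => abs_nonneg _

lemma le_biSup_abs (S : Set K) (f : C(K,ℝ)) {k : K} (hk : k ∈ S) :
    |f k| ≤ ⨆ x ∈ S, |f x| := by
  have hbdd : BddAbove (Set.range fun x => ⨆ _ : x ∈ S, |f x|) := by
    refine ⟨‖f‖, ?_⟩
    rintro _ ⟨x, rfl⟩
    exact Real.iSup_le (fun _ => by simpa using ContinuousMap.norm_coe_le_norm f x) (norm_nonneg f)
  calc |f k| = ⨆ _ : k ∈ S, |f k| := (ciSup_pos (f := fun _ => |f k|) hk).symm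
    _ ≤ ⨆ x ∈ S, |f x| := le_ciSup hbdd k

end

theorem stmt_17 {K : Type*} [MetricSpace K] [CompactSpace K]
    (Φ : Submodule ℝ C(K, ℝ)) (hclosed : IsClosed (Φ : Set C(K, ℝ)))
    (hsep : ∀ x y : K, x ≠ y → ∃ φ ∈ Φ, φ x ≠ φ y)
    (hconst : ∀ c : ℝ, ContinuousMap.const K c ∈ Φ)
    (PhiExp : Set K)
    (hPhiExp : PhiExp = {x : K | ∃ φ ∈ Φ, ∀ y : K, y ≠ x → φ y < φ x}) :
    (∀ φ ∈ Φ, ‖φ‖ = ⨆ x ∈ PhiExp, |φ x|) ∧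
      (∀ C : Set K, IsClosed C → (∀ φ ∈ Φ, ‖φ‖ = ⨆ x ∈ C, |φ x|) → PhiExp ⊆ C) ∧
      (∀ φ ∈ Φ, ‖φ‖ = ⨆ x ∈ closure PhiExp, |φ x|) ∧
      (∀ C : Set K, IsClosed C → (∀ φ ∈ Φ, ‖φ‖ = ⨆ x ∈ C, |φ x|) →
        closure PhiExp ⊆ C) := by
  rcases isEmpty_or_nonempty K with hK | hK
  · -- K empty: everything degenerate
    have hzero : ∀ φ : C(K,ℝ), ‖φ‖ = 0 := fun φ => by
      rw [show φ = 0 from ContinuousMap.ext fun x => (hK.false x).elim, norm_zero]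
    have hsup : ∀ (S : Set K) (φ : C(K,ℝ)), (⨆ x ∈ S, |φ x|) = 0 := fun S φ =>
      Real.iSup_of_isEmpty _
    have hsub : ∀ S : Set K, PhiExp ⊆ S := fun S x hx => ((hK.false x).elim)
    exact ⟨fun φ _ => by rw [hzero, hsup], fun C _ _ => hsub C,
      fun φ _ => by rw [hzero, hsup],
      fun C hC _ => closure_minimal (hsub C) hC⟩
  · -- part (b)
    have hb : ∀ C : Set K, IsClosed C → (∀ φ ∈ Φ, ‖φ‖ = ⨆ x ∈ C, |φ x|) → PhiExp ⊆ C := by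
      intro C hC hB x hx
      rw [hPhiExp] at hx
      obtain ⟨φ, hφΦ, hφ⟩ := hx
      set ψ : C(K,ℝ) := φ + ContinuousMap.const K (‖φ‖+1) with hψdef
      have hψΦ : ψ ∈ Φ := Φ.add_mem hφΦ (hconst _)
      have habs : ∀ z, |φ z| ≤ ‖φ‖ := fun z => by
        simpa using ContinuousMap.norm_coe_le_norm φ z
      have hψval : ∀ z, ψ z = φ z + (‖φ‖+1) := fun z => by simp [hψdef]
      have hψpos : ∀ z, 0 < ψ z := fun z => by
        have := abs_le.1 (habs z); rw [hψval]; linarith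
      have hψmax : ∀ z, ψ z ≤ ψ x := by
        intro z
        by_cases hz : z = x
        · subst hz; exact le_refl _
        · have := hφ z hz; rw [hψval, hψval]; linarith
      have hψnorm : ‖ψ‖ = ψ x := by
        refine le_antisymm ((ContinuousMap.norm_le _ (hψpos x).le).2 fun z => ?_) ?_
        · rw [Real.norm_eq_abs, abs_of_pos (hψpos z)]; exact hψmax z
        · have h1 : |ψ x| ≤ ‖ψ‖ := by simpa using ContinuousMap.norm_coe_le_norm ψ x
          linarith [le_abs_self (ψ x)]
      by_contra hxC
      have hBψ := hB ψ hψΦ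
      rw [hψnorm] at hBψ
      rcases C.eq_empty_or_nonempty with rfl | hCne
      · have h0 : (⨆ w ∈ (∅: Set K), |ψ w|) = 0 := by simp
        rw [h0] at hBψ; linarith [hψpos x]
      · obtain ⟨z0, hz0C, hz0max⟩ := (hC.isCompact).exists_isMaxOn hCne
          (φ.continuous.add continuous_const).abs.continuousOn
        have hz0max' : ∀ w ∈ C, |ψ w| ≤ |ψ z0| := by
          intro w hw
          have := hz0max hw
          simpa [hψval] using this
        have hsupC : (⨆ w ∈ C, |ψ w|) ≤ |ψ z0| :=
          Real.iSup_le (fun w => Real.iSup_le (fun hw => hz0max' w hw) (abs_nonneg _))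
            (abs_nonneg _)
        have hz0x : z0 ≠ x := fun h => hxC (h ▸ hz0C)
        have hlt : ψ z0 < ψ x := by
          have := hφ z0 hz0x; rw [hψval, hψval]; linarith
        rw [abs_of_pos (hψpos z0)] at hsupC
        linarith
    -- the approximation claim
    have claim : ∀ φ' ∈ Φ, ∀ ε : ℝ, 0 < ε → ∃ k ∈ PhiExp, msup φ' - ε ≤ φ' k := by
      intro φ' hφ' ε hε
      obtain ⟨ψ, hψΦ, hψclose, k, hk⟩ :=
        dense_exposing Φ hclosed hsep φ' hφ' (ε/2) (by positivity)
      have hkmem : k ∈ PhiExp := by rw [hPhiExp]; exact ⟨ψ, hψΦ, hk⟩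
      have hkmax : ∀ y, ψ y ≤ ψ k := by
        intro y
        by_cases hy : y = k
        · subst hy; exact le_refl _
        · exact (hk y hy).le
      have h1 : msup φ' ≤ msup ψ + ‖φ' - ψ‖ := msup_lip _ _
      have h2 : msup ψ = ψ k := msup_eq _ hkmax
      have h3 : |ψ k - φ' k| ≤ ‖ψ - φ'‖ := by
        simpa using ContinuousMap.norm_coe_le_norm (ψ - φ') k
      have h4 : ‖φ' - ψ‖ = ‖ψ - φ'‖ := by rw [← norm_neg]; congr 1; ring
      have h5 := abs_le.1 h3
      refine ⟨k, hkmem, ?_⟩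
      have : ‖ψ - φ'‖ ≤ ε/2 := by rw [show ψ - φ' = ψ - φ' from rfl]; linarith [hψclose]
      linarith [h1, h2 ▸ h1]
    -- part (a)
    have ha : ∀ φ ∈ Φ, ‖φ‖ = ⨆ x ∈ PhiExp, |φ x| := by
      intro φ hφΦ
      refine le_antisymm ?_ (biSup_abs_le _ _)
      refine le_of_forall_pos_le_add ?_
      intro ε hε
      obtain ⟨xb, hxb⟩ : ∃ x, ∀ y, |φ y| ≤ |φ x| := by
        obtain ⟨x, -, hx⟩ := isCompact_univ.exists_isMaxOn Set.univ_nonempty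
          φ.continuous.abs.continuousOn
        exact ⟨x, fun y => hx (Set.mem_univ y)⟩
      have hnormφ : ‖φ‖ = |φ xb| :=
        le_antisymm ((ContinuousMap.norm_le _ (abs_nonneg _)).2 fun y => by
            simpa using hxb y)
          (by simpa using ContinuousMap.norm_coe_le_norm φ xb)
      obtain ⟨φ'', hφ''Φ, hφ''x, hφ''abs⟩ :
          ∃ φ'' ∈ Φ, φ'' xb = |φ xb| ∧ ∀ z : K, |φ'' z| = |φ z| := by
        rcases le_or_gt 0 (φ xb) with h | h
        · exact ⟨φ, hφΦ, (abs_of_nonneg h).symm, fun z => rfl⟩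
        · refine ⟨-φ, Φ.neg_mem hφΦ, ?_, fun z => by simp⟩
          simp [abs_of_neg h]
      obtain ⟨k, hkmem, hk⟩ := claim φ'' hφ''Φ ε hε
      have h1 : φ'' xb ≤ msup φ'' := le_msup _ _
      have h2 : φ'' k ≤ |φ'' k| := le_abs_self _
      have h3 : |φ k| ≤ ⨆ x ∈ PhiExp, |φ x| := le_biSup_abs _ _ hkmem
      rw [hnormφ]
      rw [← hφ''x]
      rw [← hφ''abs k] at h3
      linarith
    refine ⟨ha, hb, ?_, fun C hC hB => closure_minimal (hb C hC hB) hC⟩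
    intro φ hφΦ
    refine le_antisymm ?_ (biSup_abs_le _ _)
    rw [ha φ hφΦ]
    refine Real.iSup_le (fun x => Real.iSup_le (fun hx => ?_) (biSup_abs_nonneg _ _))
      (biSup_abs_nonneg _ _)
    exact le_biSup_abs _ _ (subset_closure hx)
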